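/- arXiv:1710.05506 — 2 statements merged into one kernel-verified Lean document; each statement's English description precedes it below -/
import Mathlib

section
/- Let D₁₀ ⊆ ℝ² be the decagon given as the convex hull of the ten points (−3/5, −5/4), (3/5, −3/4), (7/5, −1/4), (8/5, 1/4), (7/5, 3/4), (3/5, 5/4), (−3/5, 3/4), (−7/5, 1/4), (−8/5, −1/4), (−7/5, −3/4). Then D₁₀ + ℤ² is a five-fold lattice tiling of ℝ². -/
open Set

/-- `K + Λ` is a `k`-fold tiling of `ℝⁿ`: every point lies in at least `k`
translates `K + v`, `v ∈ Λ`, and in at most `k` translates `int K + v`. -/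
def IsKFoldTiling {n : ℕ} (K Λ : Set (Fin n → ℝ)) (k : ℕ) : Prop :=
  ∀ x : Fin n → ℝ,
    (k : ℕ∞) ≤ {v | v ∈ Λ ∧ x - v ∈ K}.encard ∧
    {v | v ∈ Λ ∧ x - v ∈ interior K}.encard ≤ (k : ℕ∞)

/-- The integer lattice `ℤⁿ ⊆ ℝⁿ`. -/
def intLattice (n : ℕ) : Set (Fin n → ℝ) := {v | ∀ i, ∃ m : ℤ, v i = m}

/-- The decagon `D₁₀`. -/
noncomputable def D₁₀ : Set (Fin 2 → ℝ) :=
  convexHull ℝ ({![-3/5, -5/4], ![3/5, -3/4], ![7/5, -1/4], ![8/5, 1/4], ![7/5, 3/4],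
    ![3/5, 5/4], ![-3/5, 3/4], ![-7/5, 1/4], ![-8/5, -1/4], ![-7/5, -3/4]} : Set (Fin 2 → ℝ))

/-- H-representation predicate. -/
def inD (u w : ℝ) : Prop :=
  5*u - 12*w ≤ 12 ∧ 5*u - 8*w ≤ 9 ∧ 10*u - 4*w ≤ 15 ∧ 10*u + 4*w ≤ 17 ∧ 5*u + 8*w ≤ 13 ∧
  -5*u + 12*w ≤ 12 ∧ -5*u + 8*w ≤ 9 ∧ -10*u + 4*w ≤ 15 ∧ -10*u - 4*w ≤ 17 ∧ -5*u - 8*w ≤ 13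

def inD' (u w : ℝ) : Prop :=
  5*u - 12*w < 12 ∧ 5*u - 8*w < 9 ∧ 10*u - 4*w < 15 ∧ 10*u + 4*w < 17 ∧ 5*u + 8*w < 13 ∧
  -5*u + 12*w < 12 ∧ -5*u + 8*w < 9 ∧ -10*u + 4*w < 15 ∧ -10*u - 4*w < 17 ∧ -5*u - 8*w < 13

def vi (m n : ℤ) : Fin 2 → ℝ := ![(m : ℝ), (n : ℝ)]

lemma vi_inj {m n m' n' : ℤ} : vi m n = vi m' n' ↔ m = m' ∧ n = n' := by
  constructor
  · intro h
    have h0 := congrFun h 0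
    have h1 := congrFun h 1
    simp [vi] at h0 h1
    exact ⟨by exact_mod_cast h0, by exact_mod_cast h1⟩
  · rintro ⟨rfl, rfl⟩; rfl

lemma vi_mem_lattice (m n : ℤ) : vi m n ∈ intLattice 2 := by
  intro i
  fin_cases i
  · exact ⟨m, by simp [vi]⟩
  · exact ⟨n, by simp [vi]⟩

lemma lattice_repr {v : Fin 2 → ℝ} (h : v ∈ intLattice 2) : ∃ m n : ℤ, v = vi m n := by
  obtain ⟨m, hm⟩ := h 0
  obtain ⟨n, hn⟩ := h 1
  refine ⟨m, n, ?_⟩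
  funext i
  fin_cases i <;> simp [vi, hm, hn]

lemma sub_vi_0 (x : Fin 2 → ℝ) (m n : ℤ) : (x - vi m n) 0 = x 0 - m := by simp [vi]
lemma sub_vi_1 (x : Fin 2 → ℝ) (m n : ℤ) : (x - vi m n) 1 = x 1 - n := by simp [vi]

/-- three-point convex combination lies in the hull -/
lemma combo_mem {S : Set (Fin 2 → ℝ)} {A B C : Fin 2 → ℝ} (hA : A ∈ S) (hB : B ∈ S)
    (hC : C ∈ S) {a b c : ℝ} (ha : 0 ≤ a) (hb : 0 ≤ b) (hc : 0 ≤ c) (habc : a + b + c = 1) :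
    a • A + b • B + c • C ∈ convexHull ℝ S := by
  have hconv := convex_convexHull ℝ S
  have hA' := subset_convexHull ℝ S hA
  have hB' := subset_convexHull ℝ S hB
  have hC' := subset_convexHull ℝ S hC
  rcases eq_or_lt_of_le (add_nonneg hb hc) with h0 | hpos
  · have hb0 : b = 0 := by linarith
    have hc0 : c = 0 := by linarith
    have ha1 : a = 1 := by linarith
    simpa [hb0, hc0, ha1] using hA'
  · have hq : (b / (b + c)) • B + (c / (b + c)) • C ∈ convexHull ℝ S :=
      hconv hB' hC' (div_nonneg hb (le_of_lt hpos)) (div_nonneg hc (le_of_lt hpos))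
        (by field_simp)
    have := hconv hA' hq ha (le_of_lt hpos) (by linarith)
    have hne : b + c ≠ 0 := ne_of_gt hpos
    have heq : a • A + b • B + c • C
        = a • A + (b + c) • ((b / (b + c)) • B + (c / (b + c)) • C) := by
      rw [smul_add, smul_smul, smul_smul]
      have h1 : (b + c) * (b / (b + c)) = b := by field_simp
      have h2 : (b + c) * (c / (b + c)) = c := by field_simp
      rw [h1, h2, add_assoc]
    rw [heq]
    exact this
set_option maxHeartbeats 2000000 in
lemma hull_of_inD {u w : ℝ} (h : inD u w) : (![u, w] : Fin 2 → ℝ) ∈ D₁₀ := by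
  obtain ⟨h1, h2, h3, h4, h5, h6, h7, h8, h9, h10⟩ := h
  rw [D₁₀]
  have hP1 : (![-3/5, -5/4] : Fin 2 → ℝ) ∈ ({![-3/5, -5/4], ![3/5, -3/4], ![7/5, -1/4], ![8/5, 1/4], ![7/5, 3/4], ![3/5, 5/4], ![-3/5, 3/4], ![-7/5, 1/4], ![-8/5, -1/4], ![-7/5, -3/4]} : Set (Fin 2 → ℝ)) := Set.mem_insert _ _
  have hP2 : (![3/5, -3/4] : Fin 2 → ℝ) ∈ ({![-3/5, -5/4], ![3/5, -3/4], ![7/5, -1/4], ![8/5, 1/4], ![7/5, 3/4], ![3/5, 5/4], ![-3/5, 3/4], ![-7/5, 1/4], ![-8/5, -1/4], ![-7/5, -3/4]} : Set (Fin 2 → ℝ)) := Set.mem_insert_of_mem _ (Set.mem_insert _ _)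
  have hP3 : (![7/5, -1/4] : Fin 2 → ℝ) ∈ ({![-3/5, -5/4], ![3/5, -3/4], ![7/5, -1/4], ![8/5, 1/4], ![7/5, 3/4], ![3/5, 5/4], ![-3/5, 3/4], ![-7/5, 1/4], ![-8/5, -1/4], ![-7/5, -3/4]} : Set (Fin 2 → ℝ)) := Set.mem_insert_of_mem _ (Set.mem_insert_of_mem _ (Set.mem_insert _ _))
  have hP4 : (![8/5, 1/4] : Fin 2 → ℝ) ∈ ({![-3/5, -5/4], ![3/5, -3/4], ![7/5, -1/4], ![8/5, 1/4], ![7/5, 3/4], ![3/5, 5/4], ![-3/5, 3/4], ![-7/5, 1/4], ![-8/5, -1/4], ![-7/5, -3/4]} : Set (Fin 2 → ℝ)) := Set.mem_insert_of_mem _ (Set.mem_insert_of_mem _ (Set.mem_insert_of_mem _ (Set.mem_insert _ _)))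
  have hP5 : (![7/5, 3/4] : Fin 2 → ℝ) ∈ ({![-3/5, -5/4], ![3/5, -3/4], ![7/5, -1/4], ![8/5, 1/4], ![7/5, 3/4], ![3/5, 5/4], ![-3/5, 3/4], ![-7/5, 1/4], ![-8/5, -1/4], ![-7/5, -3/4]} : Set (Fin 2 → ℝ)) := Set.mem_insert_of_mem _ (Set.mem_insert_of_mem _ (Set.mem_insert_of_mem _ (Set.mem_insert_of_mem _ (Set.mem_insert _ _))))
  have hP6 : (![3/5, 5/4] : Fin 2 → ℝ) ∈ ({![-3/5, -5/4], ![3/5, -3/4], ![7/5, -1/4], ![8/5, 1/4], ![7/5, 3/4], ![3/5, 5/4], ![-3/5, 3/4], ![-7/5, 1/4], ![-8/5, -1/4], ![-7/5, -3/4]} : Set (Fin 2 → ℝ)) := Set.mem_insert_of_mem _ (Set.mem_insert_of_mem _ (Set.mem_insert_of_mem _ (Set.mem_insert_of_mem _ (Set.mem_insert_of_mem _ (Set.mem_insert _ _)))))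
  have hP7 : (![-3/5, 3/4] : Fin 2 → ℝ) ∈ ({![-3/5, -5/4], ![3/5, -3/4], ![7/5, -1/4], ![8/5, 1/4], ![7/5, 3/4], ![3/5, 5/4], ![-3/5, 3/4], ![-7/5, 1/4], ![-8/5, -1/4], ![-7/5, -3/4]} : Set (Fin 2 → ℝ)) := Set.mem_insert_of_mem _ (Set.mem_insert_of_mem _ (Set.mem_insert_of_mem _ (Set.mem_insert_of_mem _ (Set.mem_insert_of_mem _ (Set.mem_insert_of_mem _ (Set.mem_insert _ _))))))
  have hP8 : (![-7/5, 1/4] : Fin 2 → ℝ) ∈ ({![-3/5, -5/4], ![3/5, -3/4], ![7/5, -1/4], ![8/5, 1/4], ![7/5, 3/4], ![3/5, 5/4], ![-3/5, 3/4], ![-7/5, 1/4], ![-8/5, -1/4], ![-7/5, -3/4]} : Set (Fin 2 → ℝ)) := Set.mem_insert_of_mem _ (Set.mem_insert_of_mem _ (Set.mem_insert_of_mem _ (Set.mem_insert_of_mem _ (Set.mem_insert_of_mem _ (Set.mem_insert_of_mem _ (Set.mem_insert_of_mem _ (Set.mem_insert _ _)))))))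
  have hP9 : (![-8/5, -1/4] : Fin 2 → ℝ) ∈ ({![-3/5, -5/4], ![3/5, -3/4], ![7/5, -1/4], ![8/5, 1/4], ![7/5, 3/4], ![3/5, 5/4], ![-3/5, 3/4], ![-7/5, 1/4], ![-8/5, -1/4], ![-7/5, -3/4]} : Set (Fin 2 → ℝ)) := Set.mem_insert_of_mem _ (Set.mem_insert_of_mem _ (Set.mem_insert_of_mem _ (Set.mem_insert_of_mem _ (Set.mem_insert_of_mem _ (Set.mem_insert_of_mem _ (Set.mem_insert_of_mem _ (Set.mem_insert_of_mem _ (Set.mem_insert _ _))))))))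
  have hP10 : (![-7/5, -3/4] : Fin 2 → ℝ) ∈ ({![-3/5, -5/4], ![3/5, -3/4], ![7/5, -1/4], ![8/5, 1/4], ![7/5, 3/4], ![3/5, 5/4], ![-3/5, 3/4], ![-7/5, 1/4], ![-8/5, -1/4], ![-7/5, -3/4]} : Set (Fin 2 → ℝ)) := Set.mem_insert_of_mem _ (Set.mem_insert_of_mem _ (Set.mem_insert_of_mem _ (Set.mem_insert_of_mem _ (Set.mem_insert_of_mem _ (Set.mem_insert_of_mem _ (Set.mem_insert_of_mem _ (Set.mem_insert_of_mem _ (Set.mem_insert_of_mem _ (Set.mem_singleton _)))))))))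
  have hd2 : 0 ≤ (-1/2)*u + (6/5)*w + (6/5) := by linarith
  have hd10 : (-1/2)*u + (-4/5)*w + (-13/10) ≤ 0 := by linarith
  rcases le_or_gt ((-1)*u + (2)*w + (19/10)) 0 with c3 | c3
  · have hmem := combo_mem hP1 hP2 hP3
      (a := (-5/2)*u + (4)*w + (9/2)) (b := (5)*u + (-10)*w + (-19/2)) (c := (-5/2)*u + (6)*w + (6))
      (by linarith) (by linarith) (by linarith) (by ring)
    have heq : (![u, w] : Fin 2 → ℝ) = ((-5/2)*u + (4)*w + (9/2)) • (![-3/5, -5/4] : Fin 2 → ℝ) + ((5)*u + (-10)*w + (-19/2)) • (![3/5, -3/4] : Fin 2 → ℝ) + ((-5/2)*u + (6)*w + (6)) • (![7/5, -1/4] : Fin 2 → ℝ) := by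
      funext i; fin_cases i <;> simp <;> ring
    rw [heq]; exact hmem
  rcases le_or_gt ((-3/2)*u + (11/5)*w + (37/20)) 0 with c4 | c4
  · have hmem := combo_mem hP1 hP3 hP4
      (a := (-5/8)*u + (1/4)*w + (15/16)) (b := (15/8)*u + (-11/4)*w + (-37/16)) (c := (-5/4)*u + (5/2)*w + (19/8))
      (by linarith) (by linarith) (by linarith) (by ring)
    have heq : (![u, w] : Fin 2 → ℝ) = ((-5/8)*u + (1/4)*w + (15/16)) • (![-3/5, -5/4] : Fin 2 → ℝ) + ((15/8)*u + (-11/4)*w + (-37/16)) • (![7/5, -1/4] : Fin 2 → ℝ) + ((-5/4)*u + (5/2)*w + (19/8)) • (![8/5, 1/4] : Fin 2 → ℝ) := by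
      funext i; fin_cases i <;> simp <;> ring
    rw [heq]; exact hmem
  rcases le_or_gt ((-2)*u + (2)*w + (13/10)) 0 with c5 | c5
  · have hmem := combo_mem hP1 hP4 hP5
      (a := (-5/14)*u + (-1/7)*w + (17/28)) (b := (10/7)*u + (-10/7)*w + (-13/14)) (c := (-15/14)*u + (11/7)*w + (37/28))
      (by linarith) (by linarith) (by linarith) (by ring)
    have heq : (![u, w] : Fin 2 → ℝ) = ((-5/14)*u + (-1/7)*w + (17/28)) • (![-3/5, -5/4] : Fin 2 → ℝ) + ((10/7)*u + (-10/7)*w + (-13/14)) • (![8/5, 1/4] : Fin 2 → ℝ) + ((-15/14)*u + (11/7)*w + (37/28)) • (![7/5, 3/4] : Fin 2 → ℝ) := by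
      funext i; fin_cases i <;> simp <;> ring
    rw [heq]; exact hmem
  rcases le_or_gt ((-5/2)*u + (6/5)*w + (0)) 0 with c6 | c6
  · have hmem := combo_mem hP1 hP5 hP6
      (a := (-5/26)*u + (-4/13)*w + (1/2)) (b := (25/26)*u + (-6/13)*w + (0)) (c := (-10/13)*u + (10/13)*w + (1/2))
      (by linarith) (by linarith) (by linarith) (by ring)
    have heq : (![u, w] : Fin 2 → ℝ) = ((-5/26)*u + (-4/13)*w + (1/2)) • (![-3/5, -5/4] : Fin 2 → ℝ) + ((25/26)*u + (-6/13)*w + (0)) • (![7/5, 3/4] : Fin 2 → ℝ) + ((-10/13)*u + (10/13)*w + (1/2)) • (![3/5, 5/4] : Fin 2 → ℝ) := by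
      funext i; fin_cases i <;> simp <;> ring
    rw [heq]; exact hmem
  rcases le_or_gt ((-2)*u + (0)*w + (-6/5)) 0 with c7 | c7
  · have hmem := combo_mem hP1 hP6 hP7
      (a := (5/24)*u + (-1/2)*w + (1/2)) (b := (5/6)*u + (0)*w + (1/2)) (c := (-25/24)*u + (1/2)*w + (0))
      (by linarith) (by linarith) (by linarith) (by ring)
    have heq : (![u, w] : Fin 2 → ℝ) = ((5/24)*u + (-1/2)*w + (1/2)) • (![-3/5, -5/4] : Fin 2 → ℝ) + ((5/6)*u + (0)*w + (1/2)) • (![3/5, 5/4] : Fin 2 → ℝ) + ((-25/24)*u + (1/2)*w + (0)) • (![-3/5, 3/4] : Fin 2 → ℝ) := by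
      funext i; fin_cases i <;> simp <;> ring
    rw [heq]; exact hmem
  rcases le_or_gt ((-3/2)*u + (-4/5)*w + (-19/10)) 0 with c8 | c8
  · have hmem := combo_mem hP1 hP7 hP8
      (a := (5/16)*u + (-1/2)*w + (9/16)) (b := (15/16)*u + (1/2)*w + (19/16)) (c := (-5/4)*u + (0)*w + (-3/4))
      (by linarith) (by linarith) (by linarith) (by ring)
    have heq : (![u, w] : Fin 2 → ℝ) = ((5/16)*u + (-1/2)*w + (9/16)) • (![-3/5, -5/4] : Fin 2 → ℝ) + ((15/16)*u + (1/2)*w + (19/16)) • (![-3/5, 3/4] : Fin 2 → ℝ) + ((-5/4)*u + (0)*w + (-3/4)) • (![-7/5, 1/4] : Fin 2 → ℝ) := by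
      funext i; fin_cases i <;> simp <;> ring
    rw [heq]; exact hmem
  rcases le_or_gt ((-1)*u + (-1)*w + (-37/20)) 0 with c9 | c9
  · have hmem := combo_mem hP1 hP8 hP9
      (a := (5/7)*u + (-2/7)*w + (15/14)) (b := (10/7)*u + (10/7)*w + (37/14)) (c := (-15/7)*u + (-8/7)*w + (-19/7))
      (by linarith) (by linarith) (by linarith) (by ring)
    have heq : (![u, w] : Fin 2 → ℝ) = ((5/7)*u + (-2/7)*w + (15/14)) • (![-3/5, -5/4] : Fin 2 → ℝ) + ((10/7)*u + (10/7)*w + (37/14)) • (![-7/5, 1/4] : Fin 2 → ℝ) + ((-15/7)*u + (-8/7)*w + (-19/7)) • (![-8/5, -1/4] : Fin 2 → ℝ) := by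
      funext i; fin_cases i <;> simp <;> ring
    rw [heq]; exact hmem
  · have hmem := combo_mem hP1 hP9 hP10
      (a := (5/3)*u + (2/3)*w + (17/6)) (b := (5/3)*u + (8/3)*w + (13/3)) (c := (-10/3)*u + (-10/3)*w + (-37/6))
      (by linarith) (by linarith) (by linarith) (by ring)
    have heq : (![u, w] : Fin 2 → ℝ) = ((5/3)*u + (2/3)*w + (17/6)) • (![-3/5, -5/4] : Fin 2 → ℝ) + ((5/3)*u + (8/3)*w + (13/3)) • (![-8/5, -1/4] : Fin 2 → ℝ) + ((-10/3)*u + (-10/3)*w + (-37/6)) • (![-7/5, -3/4] : Fin 2 → ℝ) := by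
      funext i; fin_cases i <;> simp <;> ring
    rw [heq]; exact hmem
set_option maxHeartbeats 1000000 in
lemma D_subset_inD : D₁₀ ⊆ {p : Fin 2 → ℝ | inD (p 0) (p 1)} := by
  rw [D₁₀]
  apply convexHull_min
  · intro v hv
    simp only [Set.mem_insert_iff, Set.mem_singleton_iff] at hv
    rcases hv with rfl|rfl|rfl|rfl|rfl|rfl|rfl|rfl|rfl|rfl <;>
      · show inD _ _
        unfold inD
        norm_num
  · intro p hp q hq a b ha hb hab
    obtain ⟨p1,p2,p3,p4,p5,p6,p7,p8,p9,p10⟩ := hp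
    obtain ⟨q1,q2,q3,q4,q5,q6,q7,q8,q9,q10⟩ := hq
    have e0 : (a • p + b • q) 0 = a * p 0 + b * q 0 := by simp
    have e1 : (a • p + b • q) 1 = a * p 1 + b * q 1 := by simp
    show inD _ _
    rw [e0, e1]
    refine ⟨?_,?_,?_,?_,?_,?_,?_,?_,?_,?_⟩ <;>
      linarith [mul_le_mul_of_nonneg_left p1 ha, mul_le_mul_of_nonneg_left q1 hb,
        mul_le_mul_of_nonneg_left p2 ha, mul_le_mul_of_nonneg_left q2 hb,
        mul_le_mul_of_nonneg_left p3 ha, mul_le_mul_of_nonneg_left q3 hb,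
        mul_le_mul_of_nonneg_left p4 ha, mul_le_mul_of_nonneg_left q4 hb,
        mul_le_mul_of_nonneg_left p5 ha, mul_le_mul_of_nonneg_left q5 hb,
        mul_le_mul_of_nonneg_left p6 ha, mul_le_mul_of_nonneg_left q6 hb,
        mul_le_mul_of_nonneg_left p7 ha, mul_le_mul_of_nonneg_left q7 hb,
        mul_le_mul_of_nonneg_left p8 ha, mul_le_mul_of_nonneg_left q8 hb,
        mul_le_mul_of_nonneg_left p9 ha, mul_le_mul_of_nonneg_left q9 hb,
        mul_le_mul_of_nonneg_left p10 ha, mul_le_mul_of_nonneg_left q10 hb]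

lemma mem_D_iff (p : Fin 2 → ℝ) : p ∈ D₁₀ ↔ inD (p 0) (p 1) := by
  constructor
  · exact fun h => D_subset_inD h
  · intro h
    have hp : p = ![p 0, p 1] := by
      funext i; fin_cases i <;> rfl
    rw [hp]
    exact hull_of_inD h
lemma interior_lt {S : Set (Fin 2 → ℝ)} {al be c : ℝ} (hpos : 0 < al^2 + be^2)
    (h : ∀ p ∈ S, al * p 0 + be * p 1 ≤ c) {x : Fin 2 → ℝ} (hx : x ∈ interior S) :
    al * x 0 + be * x 1 < c := by
  have hS : S ∈ nhds x := mem_interior_iff_mem_nhds.mp hx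
  obtain ⟨ε, hε, hball⟩ := Metric.mem_nhds_iff.mp hS
  set δ : ℝ := ε / (|al| + |be| + 1) with hδdef
  have hden : (0:ℝ) < |al| + |be| + 1 := by positivity
  have hδ : 0 < δ := div_pos hε hden
  set q : Fin 2 → ℝ := x + δ • ![al, be] with hq
  have hq0 : q 0 = x 0 + δ * al := by
    simp only [hq, Pi.add_apply, Pi.smul_apply, Matrix.cons_val_zero, smul_eq_mul]
  have hq1 : q 1 = x 1 + δ * be := by
    simp only [hq, Pi.add_apply, Pi.smul_apply, Matrix.cons_val_one, Matrix.cons_val_zero,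
      smul_eq_mul]
  have hqball : q ∈ Metric.ball x ε := by
    rw [Metric.mem_ball, dist_eq_norm]
    have : q - x = δ • ![al, be] := by rw [hq]; abel
    rw [this, norm_smul, Real.norm_eq_abs, abs_of_pos hδ]
    have hnorm : ‖(![al, be] : Fin 2 → ℝ)‖ ≤ |al| + |be| := by
      rw [pi_norm_le_iff_of_nonneg (by positivity)]
      intro i
      fin_cases i
      · show ‖(![al, be] : Fin 2 → ℝ) 0‖ ≤ _
        rw [Matrix.cons_val_zero, Real.norm_eq_abs]
        linarith [abs_nonneg be]
      · show ‖(![al, be] : Fin 2 → ℝ) 1‖ ≤ _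
        rw [Matrix.cons_val_one, Matrix.cons_val_zero, Real.norm_eq_abs]
        linarith [abs_nonneg al]
    calc δ * ‖(![al, be] : Fin 2 → ℝ)‖ ≤ δ * (|al| + |be|) := by
          exact mul_le_mul_of_nonneg_left hnorm (le_of_lt hδ)
    _ < δ * (|al| + |be| + 1) := by nlinarith
    _ = ε := by rw [hδdef]; field_simp
  have hqS := h q (hball hqball)
  rw [hq0, hq1] at hqS
  nlinarith [mul_pos hδ hpos]

lemma inD'_of_interior {x : Fin 2 → ℝ} (hx : x ∈ interior D₁₀) : inD' (x 0) (x 1) := by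
  have g : ∀ (al be c : ℝ), 0 < al^2 + be^2 →
      (∀ u w : ℝ, inD u w → al * u + be * w ≤ c) → al * x 0 + be * x 1 < c := by
    intro al be c hpos hineq
    exact interior_lt hpos (fun p hp => hineq (p 0) (p 1) ((mem_D_iff p).mp hp)) hx
  refine ⟨?_,?_,?_,?_,?_,?_,?_,?_,?_,?_⟩
  · have := g 5 (-12) 12 (by norm_num) (fun u w h => by obtain ⟨h1,_⟩ := h; linarith); linarith
  · have := g 5 (-8) 9 (by norm_num) (fun u w h => by obtain ⟨_,h2,_⟩ := h; linarith); linarith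
  · have := g 10 (-4) 15 (by norm_num) (fun u w h => by obtain ⟨_,_,h3,_⟩ := h; linarith); linarith
  · have := g 10 4 17 (by norm_num) (fun u w h => by obtain ⟨_,_,_,h4,_⟩ := h; linarith); linarith
  · have := g 5 8 13 (by norm_num) (fun u w h => by obtain ⟨_,_,_,_,h5,_⟩ := h; linarith); linarith
  · have := g (-5) 12 12 (by norm_num) (fun u w h => by obtain ⟨_,_,_,_,_,h6,_⟩ := h; linarith); linarith
  · have := g (-5) 8 9 (by norm_num) (fun u w h => by obtain ⟨_,_,_,_,_,_,h7,_⟩ := h; linarith); linarith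
  · have := g (-10) 4 15 (by norm_num) (fun u w h => by obtain ⟨_,_,_,_,_,_,_,h8,_⟩ := h; linarith); linarith
  · have := g (-10) (-4) 17 (by norm_num) (fun u w h => by obtain ⟨_,_,_,_,_,_,_,_,h9,_⟩ := h; linarith); linarith
  · have := g (-5) (-8) 13 (by norm_num) (fun u w h => by obtain ⟨_,_,_,_,_,_,_,_,_,h10⟩ := h; linarith); linarith
lemma bandMid {u t : ℝ} (h1 : -(1/4) ≤ t) (h2 : t ≤ 1/4)
    (h3 : -(3/2) + (2/5)*t ≤ u) (h4 : u ≤ 3/2 + (2/5)*t) : inD u t :=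
  ⟨by linarith, by linarith, by linarith, by linarith, by linarith,
   by linarith, by linarith, by linarith, by linarith, by linarith⟩

lemma bandUM {u t : ℝ} (h1 : 1/4 ≤ t) (h2 : t ≤ 3/4)
    (h3 : (8/5)*t - 9/5 ≤ u) (h4 : u ≤ 17/10 - (2/5)*t) : inD u t :=
  ⟨by linarith, by linarith, by linarith, by linarith, by linarith,
   by linarith, by linarith, by linarith, by linarith, by linarith⟩

lemma bandTop {u t : ℝ} (h1 : 3/4 ≤ t) (h2 : t ≤ 5/4)
    (h3 : (12/5)*t - 12/5 ≤ u) (h4 : u ≤ 13/5 - (8/5)*t) : inD u t :=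
  ⟨by linarith, by linarith, by linarith, by linarith, by linarith,
   by linarith, by linarith, by linarith, by linarith, by linarith⟩

lemma bandLM {u t : ℝ} (h1 : -(3/4) ≤ t) (h2 : t ≤ -(1/4))
    (h3 : -(2/5)*t - 17/10 ≤ u) (h4 : u ≤ (8/5)*t + 9/5) : inD u t :=
  ⟨by linarith, by linarith, by linarith, by linarith, by linarith,
   by linarith, by linarith, by linarith, by linarith, by linarith⟩

lemma bandBot {u t : ℝ} (h1 : -(5/4) ≤ t) (h2 : t ≤ -(3/4))
    (h3 : -(8/5)*t - 13/5 ≤ u) (h4 : u ≤ (12/5)*t + 12/5) : inD u t :=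
  ⟨by linarith, by linarith, by linarith, by linarith, by linarith,
   by linarith, by linarith, by linarith, by linarith, by linarith⟩

lemma memS {x : Fin 2 → ℝ} {m n : ℤ} (h : inD (x 0 - m) (x 1 - n)) :
    vi m n ∈ {v | v ∈ intLattice 2 ∧ x - v ∈ D₁₀} := by
  refine ⟨vi_mem_lattice m n, ?_⟩
  rw [mem_D_iff, sub_vi_0, sub_vi_1]
  exact h

lemma memS' {x : Fin 2 → ℝ} {v : Fin 2 → ℝ}
    (h : v ∈ {v | v ∈ intLattice 2 ∧ x - v ∈ interior D₁₀}) :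
    ∃ m n : ℤ, v = vi m n ∧ inD' (x 0 - m) (x 1 - n) := by
  obtain ⟨hl, hi⟩ := h
  obtain ⟨m, n, rfl⟩ := lattice_repr hl
  refine ⟨m, n, rfl, ?_⟩
  have := inD'_of_interior hi
  rwa [sub_vi_0, sub_vi_1] at this

lemma encard_ge5 {α : Type*} {S : Set α} {w1 w2 w3 w4 w5 : α}
    (h1 : w1 ∈ S) (h2 : w2 ∈ S) (h3 : w3 ∈ S) (h4 : w4 ∈ S) (h5 : w5 ∈ S)
    (d12 : w1 ≠ w2) (d13 : w1 ≠ w3) (d14 : w1 ≠ w4) (d15 : w1 ≠ w5)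
    (d23 : w2 ≠ w3) (d24 : w2 ≠ w4) (d25 : w2 ≠ w5)
    (d34 : w3 ≠ w4) (d35 : w3 ≠ w5) (d45 : w4 ≠ w5) : (5 : ℕ∞) ≤ S.encard := by
  have hsub : ({w1, w2, w3, w4, w5} : Set α) ⊆ S := by
    intro y hy
    rcases hy with rfl|rfl|rfl|rfl|rfl <;> assumption
  have hcard : ({w1, w2, w3, w4, w5} : Set α).encard = 5 := by
    rw [Set.encard_insert_of_notMem (by simp [d12, d13, d14, d15]),
        Set.encard_insert_of_notMem (by simp [d23, d24, d25]),
        Set.encard_insert_of_notMem (by simp [d34, d35]),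
        Set.encard_insert_of_notMem (by simp [d45]),
        Set.encard_singleton]
    rfl
  calc (5 : ℕ∞) = ({w1, w2, w3, w4, w5} : Set α).encard := hcard.symm
  _ ≤ S.encard := Set.encard_mono hsub

lemma encard_le5 {α : Type*} {S : Set α} {w1 w2 w3 w4 w5 : α}
    (h : S ⊆ {w1, w2, w3, w4, w5}) : S.encard ≤ (5 : ℕ∞) := by
  calc S.encard ≤ ({w1, w2, w3, w4, w5} : Set α).encard := Set.encard_mono h
  _ ≤ 5 := by
      calc ({w1, w2, w3, w4, w5} : Set α).encard
          ≤ ({w2, w3, w4, w5} : Set α).encard + 1 := Set.encard_insert_le _ _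
      _ ≤ (({w3, w4, w5} : Set α).encard + 1) + 1 :=
            add_le_add_left (Set.encard_insert_le _ _) 1
      _ ≤ ((({w4, w5} : Set α).encard + 1) + 1) + 1 := by
            exact add_le_add_left (add_le_add_left (Set.encard_insert_le _ _) 1) 1
      _ ≤ (((({w5} : Set α).encard + 1) + 1) + 1) + 1 := by
            exact add_le_add_left (add_le_add_left (add_le_add_left
              (Set.encard_insert_le _ _) 1) 1) 1
      _ = 5 := by rw [Set.encard_singleton]; rfl
set_option maxHeartbeats 4000000 in
/-- `D₁₀ + ℤ²` is a five-fold lattice tiling of the plane. -/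
theorem D10_fivefold_tiling : IsKFoldTiling D₁₀ (intLattice 2) 5 := by
  classical
  intro x
  set a : ℝ := x 0 with ha
  set b : ℝ := x 1 with hb
  set q : ℤ := ⌊b⌋ with hqdef
  set β : ℝ := b - q with hβ
  have hβ0 : 0 ≤ β := by
    rw [hβ]; simp only [hqdef, sub_nonneg]; exact Int.floor_le b
  have hβ1 : β < 1 := by
    rw [hβ]; simp only [hqdef]; linarith [Int.lt_floor_add_one b]
  have hqr : (q:ℝ) = b - β := by rw [hβ]; ring
  have h5cast : ((5:ℕ) : ℕ∞) = (5 : ℕ∞) := by norm_cast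
  clear_value a b q β
  constructor
  · -- lower bound
    rw [h5cast]
    rcases le_or_gt β (1/4) with hA | hB'
    · -- CASE A
      set m1 : ℤ := ⌈a - 3/2 - (2/5)*β⌉ with hm1def
      have hm1a : a - 3/2 - (2/5)*β ≤ (m1:ℝ) := Int.le_ceil _
      have hm1b : (m1:ℝ) < a - 3/2 - (2/5)*β + 1 := Int.ceil_lt_add_one _
      set m2 : ℤ := ⌈a - 1 + (8/5)*β⌉ with hm2def
      have hm2a : a - 1 + (8/5)*β ≤ (m2:ℝ) := Int.le_ceil _
      have hm2b : (m2:ℝ) < a - 1 + (8/5)*β + 1 := Int.ceil_lt_add_one _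
      set n4 : ℤ := if ((m2:ℝ) ≤ a - (12/5)*β) then q-1 else q+1 with hn4def
      set n5 : ℤ := if (((m2+1:ℤ):ℝ) ≤ a - (12/5)*β) then q-1 else q+1 with hn5def
      have hn4val : n4 = q-1 ∨ n4 = q+1 := by
        rw [hn4def]; split_ifs <;> [exact Or.inl rfl; exact Or.inr rfl]
      have hn5val : n5 = q-1 ∨ n5 = q+1 := by
        rw [hn5def]; split_ifs <;> [exact Or.inl rfl; exact Or.inr rfl]
      clear_value m1 m2 n4 n5
      refine encard_ge5 (w1 := vi m1 q) (w2 := vi (m1+1) q) (w3 := vi (m1+2) q)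
        (w4 := vi m2 n4) (w5 := vi (m2+1) n5) ?_ ?_ ?_ ?_ ?_ ?_ ?_ ?_ ?_ ?_ ?_ ?_ ?_ ?_ ?_
      · apply memS
        rw [← ha, ← hb]
        exact bandMid (by linarith) (by linarith) (by push_cast; linarith)
          (by push_cast; linarith)
      · apply memS
        rw [← ha, ← hb]
        exact bandMid (by linarith) (by linarith) (by push_cast; linarith)
          (by push_cast; linarith)
      · apply memS
        rw [← ha, ← hb]
        exact bandMid (by linarith) (by linarith) (by push_cast; linarith)
          (by push_cast; linarith)
      · apply memS
        rw [← ha, ← hb]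
        by_cases hc : ((m2:ℝ) ≤ a - (12/5)*β)
        · rw [hn4def, if_pos hc]
          exact bandTop (by push_cast; linarith) (by push_cast; linarith)
            (by push_cast; linarith) (by push_cast; linarith)
        · rw [hn4def, if_neg hc]
          push_neg at hc
          exact bandBot (by push_cast; linarith) (by push_cast; linarith)
            (by push_cast; linarith) (by push_cast; linarith)
      · apply memS
        rw [← ha, ← hb]
        by_cases hc : (((m2+1:ℤ):ℝ) ≤ a - (12/5)*β)
        · rw [hn5def, if_pos hc]
          push_cast at hc
          exact bandTop (by push_cast; linarith) (by push_cast; linarith)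
            (by push_cast; linarith) (by push_cast; linarith)
        · rw [hn5def, if_neg hc]
          push_neg at hc
          push_cast at hc
          exact bandBot (by push_cast; linarith) (by push_cast; linarith)
            (by push_cast; linarith) (by push_cast; linarith)
      · simp only [ne_eq, vi_inj, not_and]; omega
      · simp only [ne_eq, vi_inj, not_and]; omega
      · simp only [ne_eq, vi_inj, not_and]; intro _; rcases hn4val with h|h <;> omega
      · simp only [ne_eq, vi_inj, not_and]; intro _; rcases hn5val with h|h <;> omega
      · simp only [ne_eq, vi_inj, not_and]; omega
      · simp only [ne_eq, vi_inj, not_and]; intro _; rcases hn4val with h|h <;> omega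
      · simp only [ne_eq, vi_inj, not_and]; intro _; rcases hn5val with h|h <;> omega
      · simp only [ne_eq, vi_inj, not_and]; intro _; rcases hn4val with h|h <;> omega
      · simp only [ne_eq, vi_inj, not_and]; intro _; rcases hn5val with h|h <;> omega
      · simp only [ne_eq, vi_inj, not_and]; omega
    · rcases le_or_gt β (3/4) with hB | hC'
      · -- CASE B lower
        set RB : ℝ := a + 9/5 - (8/5)*β with hRBdef
        set j0 : ℤ := ⌈a - 17/10 + (2/5)*β⌉ with hj0def
        have hj0a : a - 17/10 + (2/5)*β ≤ (j0:ℝ) := Int.le_ceil _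
        have hj0b : (j0:ℝ) < a - 17/10 + (2/5)*β + 1 := Int.ceil_lt_add_one _
        set M0 : ℤ := if ((j0:ℝ) ≤ RB) then j0 else j0-2 with hM0def
        set N0 : ℤ := if ((j0:ℝ) ≤ RB) then q else q+1 with hN0def
        set M1 : ℤ := if ((j0:ℝ)+1 ≤ RB) then j0+1 else j0-1 with hM1def
        set N1 : ℤ := if ((j0:ℝ)+1 ≤ RB) then q else q+1 with hN1def
        set M2 : ℤ := if ((j0:ℝ)+2 ≤ RB) then j0+2 else j0 with hM2def
        set N2 : ℤ := if ((j0:ℝ)+2 ≤ RB) then q else q+1 with hN2def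
        set M3 : ℤ := if ((j0:ℝ)+3 ≤ RB) then j0+3 else j0+1 with hM3def
        set N3 : ℤ := if ((j0:ℝ)+3 ≤ RB) then q else q+1 with hN3def
        set M4 : ℤ := if ((j0:ℝ)+4 ≤ RB) then j0+4 else j0+2 with hM4def
        set N4 : ℤ := if ((j0:ℝ)+4 ≤ RB) then q else q+1 with hN4def
        have hv0 : (M0 = j0 ∧ N0 = q ∧ (j0:ℝ) ≤ RB) ∨
            (M0 = j0-2 ∧ N0 = q+1 ∧ ¬((j0:ℝ) ≤ RB)) := by
          rw [hM0def, hN0def]; split_ifs with h; exacts [Or.inl ⟨rfl,rfl,h⟩, Or.inr ⟨rfl,rfl,h⟩]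
        have hv1 : (M1 = j0+1 ∧ N1 = q ∧ (j0:ℝ)+1 ≤ RB) ∨
            (M1 = j0-1 ∧ N1 = q+1 ∧ ¬((j0:ℝ)+1 ≤ RB)) := by
          rw [hM1def, hN1def]; split_ifs with h; exacts [Or.inl ⟨rfl,rfl,h⟩, Or.inr ⟨rfl,rfl,h⟩]
        have hv2 : (M2 = j0+2 ∧ N2 = q ∧ (j0:ℝ)+2 ≤ RB) ∨
            (M2 = j0 ∧ N2 = q+1 ∧ ¬((j0:ℝ)+2 ≤ RB)) := by
          rw [hM2def, hN2def]; split_ifs with h; exacts [Or.inl ⟨rfl,rfl,h⟩, Or.inr ⟨rfl,rfl,h⟩]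
        have hv3 : (M3 = j0+3 ∧ N3 = q ∧ (j0:ℝ)+3 ≤ RB) ∨
            (M3 = j0+1 ∧ N3 = q+1 ∧ ¬((j0:ℝ)+3 ≤ RB)) := by
          rw [hM3def, hN3def]; split_ifs with h; exacts [Or.inl ⟨rfl,rfl,h⟩, Or.inr ⟨rfl,rfl,h⟩]
        have hv4 : (M4 = j0+4 ∧ N4 = q ∧ (j0:ℝ)+4 ≤ RB) ∨
            (M4 = j0+2 ∧ N4 = q+1 ∧ ¬((j0:ℝ)+4 ≤ RB)) := by
          rw [hM4def, hN4def]; split_ifs with h; exacts [Or.inl ⟨rfl,rfl,h⟩, Or.inr ⟨rfl,rfl,h⟩]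
        clear_value RB j0 M0 N0 M1 N1 M2 N2 M3 N3 M4 N4
        refine encard_ge5 (w1 := vi M0 N0) (w2 := vi M1 N1) (w3 := vi M2 N2)
          (w4 := vi M3 N3) (w5 := vi M4 N4) ?_ ?_ ?_ ?_ ?_ ?_ ?_ ?_ ?_ ?_ ?_ ?_ ?_ ?_ ?_
        · apply memS
          rw [← ha, ← hb]
          rcases hv0 with ⟨hm,hn,hc⟩|⟨hm,hn,hc⟩ <;> rw [hm, hn]
          · exact bandUM (by linarith) (by linarith) (by push_cast; linarith)
              (by push_cast; linarith)
          · push_neg at hc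
            exact bandLM (by push_cast; linarith) (by push_cast; linarith)
              (by push_cast; linarith) (by push_cast; linarith)
        · apply memS
          rw [← ha, ← hb]
          rcases hv1 with ⟨hm,hn,hc⟩|⟨hm,hn,hc⟩ <;> rw [hm, hn]
          · exact bandUM (by linarith) (by linarith) (by push_cast; linarith)
              (by push_cast; linarith)
          · push_neg at hc
            exact bandLM (by push_cast; linarith) (by push_cast; linarith)
              (by push_cast; linarith) (by push_cast; linarith)
        · apply memS
          rw [← ha, ← hb]
          rcases hv2 with ⟨hm,hn,hc⟩|⟨hm,hn,hc⟩ <;> rw [hm, hn]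
          · exact bandUM (by linarith) (by linarith) (by push_cast; linarith)
              (by push_cast; linarith)
          · push_neg at hc
            exact bandLM (by push_cast; linarith) (by push_cast; linarith)
              (by push_cast; linarith) (by push_cast; linarith)
        · apply memS
          rw [← ha, ← hb]
          rcases hv3 with ⟨hm,hn,hc⟩|⟨hm,hn,hc⟩ <;> rw [hm, hn]
          · exact bandUM (by linarith) (by linarith) (by push_cast; linarith)
              (by push_cast; linarith)
          · push_neg at hc
            exact bandLM (by push_cast; linarith) (by push_cast; linarith)
              (by push_cast; linarith) (by push_cast; linarith)
        · apply memS
          rw [← ha, ← hb]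
          rcases hv4 with ⟨hm,hn,hc⟩|⟨hm,hn,hc⟩ <;> rw [hm, hn]
          · exact bandUM (by linarith) (by linarith) (by push_cast; linarith)
              (by push_cast; linarith)
          · push_neg at hc
            exact bandLM (by push_cast; linarith) (by push_cast; linarith)
              (by push_cast; linarith) (by push_cast; linarith)
        · simp only [ne_eq, vi_inj, not_and]
          rcases hv0 with ⟨hm,hn,hc⟩|⟨hm,hn,hc⟩ <;> rcases hv1 with ⟨hm',hn',hc'⟩|⟨hm',hn',hc'⟩ <;>
            (intro h; omega)
        · simp only [ne_eq, vi_inj, not_and]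
          rcases hv0 with ⟨hm,hn,hc⟩|⟨hm,hn,hc⟩ <;> rcases hv2 with ⟨hm',hn',hc'⟩|⟨hm',hn',hc'⟩ <;>
            (intro h; omega)
        · simp only [ne_eq, vi_inj, not_and]
          rcases hv0 with ⟨hm,hn,hc⟩|⟨hm,hn,hc⟩ <;> rcases hv3 with ⟨hm',hn',hc'⟩|⟨hm',hn',hc'⟩ <;>
            (intro h; omega)
        · simp only [ne_eq, vi_inj, not_and]
          rcases hv0 with ⟨hm,hn,hc⟩|⟨hm,hn,hc⟩ <;> rcases hv4 with ⟨hm',hn',hc'⟩|⟨hm',hn',hc'⟩ <;>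
            (intro h; omega)
        · simp only [ne_eq, vi_inj, not_and]
          rcases hv1 with ⟨hm,hn,hc⟩|⟨hm,hn,hc⟩ <;> rcases hv2 with ⟨hm',hn',hc'⟩|⟨hm',hn',hc'⟩ <;>
            (intro h; omega)
        · simp only [ne_eq, vi_inj, not_and]
          rcases hv1 with ⟨hm,hn,hc⟩|⟨hm,hn,hc⟩ <;> rcases hv3 with ⟨hm',hn',hc'⟩|⟨hm',hn',hc'⟩ <;>
            (intro h; omega)
        · simp only [ne_eq, vi_inj, not_and]
          rcases hv1 with ⟨hm,hn,hc⟩|⟨hm,hn,hc⟩ <;> rcases hv4 with ⟨hm',hn',hc'⟩|⟨hm',hn',hc'⟩ <;>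
            (intro h; omega)
        · simp only [ne_eq, vi_inj, not_and]
          rcases hv2 with ⟨hm,hn,hc⟩|⟨hm,hn,hc⟩ <;> rcases hv3 with ⟨hm',hn',hc'⟩|⟨hm',hn',hc'⟩ <;>
            (intro h; omega)
        · simp only [ne_eq, vi_inj, not_and]
          rcases hv2 with ⟨hm,hn,hc⟩|⟨hm,hn,hc⟩ <;> rcases hv4 with ⟨hm',hn',hc'⟩|⟨hm',hn',hc'⟩ <;>
            (intro h; omega)
        · simp only [ne_eq, vi_inj, not_and]
          rcases hv3 with ⟨hm,hn,hc⟩|⟨hm,hn,hc⟩ <;> rcases hv4 with ⟨hm',hn',hc'⟩|⟨hm',hn',hc'⟩ <;>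
            (intro h; omega)
      · -- CASE C lower
        set m1 : ℤ := ⌈a - 11/10 - (2/5)*β⌉ with hm1def
        have hm1a : a - 11/10 - (2/5)*β ≤ (m1:ℝ) := Int.le_ceil _
        have hm1b : (m1:ℝ) < a - 11/10 - (2/5)*β + 1 := Int.ceil_lt_add_one _
        set m2 : ℤ := ⌈a - 13/5 + (8/5)*β⌉ with hm2def
        have hm2a : a - 13/5 + (8/5)*β ≤ (m2:ℝ) := Int.le_ceil _
        have hm2b : (m2:ℝ) < a - 13/5 + (8/5)*β + 1 := Int.ceil_lt_add_one _
        set n4 : ℤ := if ((m2:ℝ) ≤ a + 12/5 - (12/5)*β) then q else q+2 with hn4def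
        set n5 : ℤ := if (((m2+1:ℤ):ℝ) ≤ a + 12/5 - (12/5)*β) then q else q+2 with hn5def
        have hn4val : n4 = q ∨ n4 = q+2 := by
          rw [hn4def]; split_ifs <;> [exact Or.inl rfl; exact Or.inr rfl]
        have hn5val : n5 = q ∨ n5 = q+2 := by
          rw [hn5def]; split_ifs <;> [exact Or.inl rfl; exact Or.inr rfl]
        clear_value m1 m2 n4 n5
        refine encard_ge5 (w1 := vi m1 (q+1)) (w2 := vi (m1+1) (q+1)) (w3 := vi (m1+2) (q+1))
          (w4 := vi m2 n4) (w5 := vi (m2+1) n5) ?_ ?_ ?_ ?_ ?_ ?_ ?_ ?_ ?_ ?_ ?_ ?_ ?_ ?_ ?_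
        · apply memS
          rw [← ha, ← hb]
          exact bandMid (by push_cast; linarith) (by push_cast; linarith)
            (by push_cast; linarith) (by push_cast; linarith)
        · apply memS
          rw [← ha, ← hb]
          exact bandMid (by push_cast; linarith) (by push_cast; linarith)
            (by push_cast; linarith) (by push_cast; linarith)
        · apply memS
          rw [← ha, ← hb]
          exact bandMid (by push_cast; linarith) (by push_cast; linarith)
            (by push_cast; linarith) (by push_cast; linarith)
        · apply memS
          rw [← ha, ← hb]
          by_cases hc : ((m2:ℝ) ≤ a + 12/5 - (12/5)*β)
          · rw [hn4def, if_pos hc]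
            exact bandTop (by push_cast; linarith) (by push_cast; linarith)
              (by push_cast; linarith) (by push_cast; linarith)
          · rw [hn4def, if_neg hc]
            push_neg at hc
            exact bandBot (by push_cast; linarith) (by push_cast; linarith)
              (by push_cast; linarith) (by push_cast; linarith)
        · apply memS
          rw [← ha, ← hb]
          by_cases hc : (((m2+1:ℤ):ℝ) ≤ a + 12/5 - (12/5)*β)
          · rw [hn5def, if_pos hc]
            push_cast at hc
            exact bandTop (by push_cast; linarith) (by push_cast; linarith)
              (by push_cast; linarith) (by push_cast; linarith)
          · rw [hn5def, if_neg hc]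
            push_neg at hc
            push_cast at hc
            exact bandBot (by push_cast; linarith) (by push_cast; linarith)
              (by push_cast; linarith) (by push_cast; linarith)
        · simp only [ne_eq, vi_inj, not_and]; omega
        · simp only [ne_eq, vi_inj, not_and]; omega
        · simp only [ne_eq, vi_inj, not_and]; intro _; rcases hn4val with h|h <;> omega
        · simp only [ne_eq, vi_inj, not_and]; intro _; rcases hn5val with h|h <;> omega
        · simp only [ne_eq, vi_inj, not_and]; omega
        · simp only [ne_eq, vi_inj, not_and]; intro _; rcases hn4val with h|h <;> omega
        · simp only [ne_eq, vi_inj, not_and]; intro _; rcases hn5val with h|h <;> omega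
        · simp only [ne_eq, vi_inj, not_and]; intro _; rcases hn4val with h|h <;> omega
        · simp only [ne_eq, vi_inj, not_and]; intro _; rcases hn5val with h|h <;> omega
        · simp only [ne_eq, vi_inj, not_and]; omega
  · -- upper bound
    rw [h5cast]
    rcases le_or_gt β (1/4) with hA | hB'
    · -- CASE A upper
      set k0 : ℤ := ⌊a - 3/2 - (2/5)*β⌋ with hk0def
      have hk0a : (k0:ℝ) ≤ a - 3/2 - (2/5)*β := Int.floor_le _
      have hk0b : a - 3/2 - (2/5)*β < k0 + 1 := Int.lt_floor_add_one _
      set k1 : ℤ := ⌊a - 1 + (8/5)*β⌋ with hk1def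
      have hk1a : (k1:ℝ) ≤ a - 1 + (8/5)*β := Int.floor_le _
      have hk1b : a - 1 + (8/5)*β < k1 + 1 := Int.lt_floor_add_one _
      set n41 : ℤ := if ((k1:ℝ)+1 < a - (12/5)*β) then q-1 else q+1 with hn41def
      set n42 : ℤ := if ((k1:ℝ)+2 < a - (12/5)*β) then q-1 else q+1 with hn42def
      clear_value k0 k1 n41 n42
      refine encard_le5 (w1 := vi (k0+1) q) (w2 := vi (k0+2) q) (w3 := vi (k0+3) q)
        (w4 := vi (k1+1) n41) (w5 := vi (k1+2) n42) ?_
      intro v hv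
      obtain ⟨m, n, rfl, hs⟩ := memS' hv
      rw [← ha, ← hb] at hs
      obtain ⟨s1,s2,s3,s4,s5,s6,s7,s8,s9,s10⟩ := hs
      have hn1 : b - 5/4 < (n:ℝ) := by linarith
      have hn2 : (n:ℝ) < b + 5/4 := by linarith
      have hncase : n = q-1 ∨ n = q ∨ n = q+1 := by
        have l1 : ((q:ℝ)) - 2 < n := by linarith
        have l2 : (n:ℝ) < (q:ℝ) + 2 := by linarith
        have i1 : q - 2 < n := by exact_mod_cast (by push_cast; linarith : ((q-2:ℤ):ℝ) < (n:ℝ))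
        have i2 : n < q + 2 := by exact_mod_cast (by push_cast; linarith : ((n:ℤ):ℝ) < ((q+2:ℤ):ℝ))
        omega
      simp only [Set.mem_insert_iff, Set.mem_singleton_iff, vi_inj]
      rcases hncase with rfl | rfl | rfl
      · -- n = q-1
        push_cast at s5 s6
        have hmlt : (m:ℝ) < a - (12/5)*β := by linarith
        have hmgt : a - 1 + (8/5)*β < (m:ℝ) := by linarith
        have i1 : k1 < m := by
          exact_mod_cast (by linarith : (k1:ℝ) < (m:ℝ))
        have i2 : m < k1 + 3 := by
          exact_mod_cast (by push_cast; linarith : ((m:ℤ):ℝ) < ((k1+3:ℤ):ℝ))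
        have hm12 : m = k1+1 ∨ m = k1+2 := by omega
        rcases hm12 with rfl | rfl
        · push_cast at hmlt
          exact Or.inr (Or.inr (Or.inr (Or.inl ⟨rfl, by rw [hn41def, if_pos hmlt]⟩)))
        · push_cast at hmlt
          exact Or.inr (Or.inr (Or.inr (Or.inr ⟨rfl, by rw [hn42def, if_pos hmlt]⟩)))
      · -- n = q
        have hmgt : a - 3/2 - (2/5)*β < (m:ℝ) := by linarith
        have hmlt : (m:ℝ) < a + 3/2 - (2/5)*β := by linarith
        have i1 : k0 < m := by
          exact_mod_cast (by linarith : (k0:ℝ) < (m:ℝ))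
        have i2 : m < k0 + 4 := by
          exact_mod_cast (by push_cast; linarith : ((m:ℤ):ℝ) < ((k0+4:ℤ):ℝ))
        have hm123 : m = k0+1 ∨ m = k0+2 ∨ m = k0+3 := by omega
        rcases hm123 with rfl | rfl | rfl
        · exact Or.inl ⟨rfl, rfl⟩
        · exact Or.inr (Or.inl ⟨rfl, rfl⟩)
        · exact Or.inr (Or.inr (Or.inl ⟨rfl, rfl⟩))
      · -- n = q+1
        push_cast at s1 s10
        have hmgt : a - (12/5)*β < (m:ℝ) := by linarith
        have hmlt : (m:ℝ) < a + 1 + (8/5)*β := by linarith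
        have i1 : k1 < m := by
          exact_mod_cast (by linarith : (k1:ℝ) < (m:ℝ))
        have i2 : m < k1 + 3 := by
          exact_mod_cast (by push_cast; linarith : ((m:ℤ):ℝ) < ((k1+3:ℤ):ℝ))
        have hm12 : m = k1+1 ∨ m = k1+2 := by omega
        rcases hm12 with rfl | rfl
        · push_cast at hmgt
          exact Or.inr (Or.inr (Or.inr (Or.inl ⟨rfl, by
            rw [hn41def, if_neg (not_lt.mpr (le_of_lt hmgt))]⟩)))
        · push_cast at hmgt
          exact Or.inr (Or.inr (Or.inr (Or.inr ⟨rfl, by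
            rw [hn42def, if_neg (not_lt.mpr (le_of_lt hmgt))]⟩)))
    rcases le_or_gt β (3/4) with hB | hC'
    · -- CASE B upper
      set k2 : ℤ := ⌊a - 17/10 + (2/5)*β⌋ with hk2def
      have hk2a : (k2:ℝ) ≤ a - 17/10 + (2/5)*β := Int.floor_le _
      have hk2b : a - 17/10 + (2/5)*β < k2 + 1 := Int.lt_floor_add_one _
      set M1 : ℤ := if ((k2:ℝ)+1 < a + 9/5 - (8/5)*β) then k2+1 else k2-1 with hM1def
      set N1 : ℤ := if ((k2:ℝ)+1 < a + 9/5 - (8/5)*β) then q else q+1 with hN1def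
      set M2 : ℤ := if ((k2:ℝ)+2 < a + 9/5 - (8/5)*β) then k2+2 else k2 with hM2def
      set N2 : ℤ := if ((k2:ℝ)+2 < a + 9/5 - (8/5)*β) then q else q+1 with hN2def
      set M3 : ℤ := if ((k2:ℝ)+3 < a + 9/5 - (8/5)*β) then k2+3 else k2+1 with hM3def
      set N3 : ℤ := if ((k2:ℝ)+3 < a + 9/5 - (8/5)*β) then q else q+1 with hN3def
      set M4 : ℤ := if ((k2:ℝ)+4 < a + 9/5 - (8/5)*β) then k2+4 else k2+2 with hM4def
      set N4 : ℤ := if ((k2:ℝ)+4 < a + 9/5 - (8/5)*β) then q else q+1 with hN4def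
      set M5 : ℤ := if ((k2:ℝ)+5 < a + 9/5 - (8/5)*β) then k2+5 else k2+3 with hM5def
      set N5 : ℤ := if ((k2:ℝ)+5 < a + 9/5 - (8/5)*β) then q else q+1 with hN5def
      clear_value k2 M1 N1 M2 N2 M3 N3 M4 N4 M5 N5
      refine encard_le5 (w1 := vi M1 N1) (w2 := vi M2 N2) (w3 := vi M3 N3)
        (w4 := vi M4 N4) (w5 := vi M5 N5) ?_
      intro v hv
      obtain ⟨m, n, rfl, hs⟩ := memS' hv
      rw [← ha, ← hb] at hs
      obtain ⟨s1,s2,s3,s4,s5,s6,s7,s8,s9,s10⟩ := hs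
      have hn1 : b - 5/4 < (n:ℝ) := by linarith
      have hn2 : (n:ℝ) < b + 5/4 := by linarith
      have hncase : n = q ∨ n = q+1 := by
        have i1 : q - 1 < n := by
          exact_mod_cast (by push_cast; linarith : ((q-1:ℤ):ℝ) < (n:ℝ))
        have i2 : n < q + 2 := by
          exact_mod_cast (by push_cast; linarith : ((n:ℤ):ℝ) < ((q+2:ℤ):ℝ))
        omega
      simp only [Set.mem_insert_iff, Set.mem_singleton_iff, vi_inj]
      rcases hncase with rfl | rfl
      · -- n = q
        have hmgt : a - 17/10 + (2/5)*β < (m:ℝ) := by linarith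
        have hmlt : (m:ℝ) < a + 9/5 - (8/5)*β := by linarith
        have i1 : k2 < m := by
          exact_mod_cast (by linarith : (k2:ℝ) < (m:ℝ))
        have i2 : m < k2 + 4 := by
          exact_mod_cast (by push_cast; linarith : ((m:ℤ):ℝ) < ((k2+4:ℤ):ℝ))
        have hm123 : m = k2+1 ∨ m = k2+2 ∨ m = k2+3 := by omega
        rcases hm123 with rfl | rfl | rfl
        · push_cast at hmlt
          exact Or.inl ⟨by rw [hM1def, if_pos hmlt], by rw [hN1def, if_pos hmlt]⟩
        · push_cast at hmlt
          exact Or.inr (Or.inl ⟨by rw [hM2def, if_pos hmlt], by rw [hN2def, if_pos hmlt]⟩)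
        · push_cast at hmlt
          exact Or.inr (Or.inr (Or.inl ⟨by rw [hM3def, if_pos hmlt],
            by rw [hN3def, if_pos hmlt]⟩))
      · -- n = q+1
        push_cast at s2 s9
        have hmgt : a - 1/5 - (8/5)*β < (m:ℝ) := by linarith
        have hmlt : (m:ℝ) < a + 13/10 + (2/5)*β := by linarith
        have i1 : k2 < m := by
          exact_mod_cast (by linarith : (k2:ℝ) < (m:ℝ))
        have i2 : m < k2 + 4 := by
          exact_mod_cast (by push_cast; linarith : ((m:ℤ):ℝ) < ((k2+4:ℤ):ℝ))
        have hm123 : m = k2+1 ∨ m = k2+2 ∨ m = k2+3 := by omega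
        rcases hm123 with rfl | rfl | rfl
        · have hge : a + 9/5 - (8/5)*β ≤ (k2:ℝ)+3 := by push_cast at hmgt; linarith
          exact Or.inr (Or.inr (Or.inl ⟨by rw [hM3def, if_neg (not_lt.mpr hge)],
            by rw [hN3def, if_neg (not_lt.mpr hge)]⟩))
        · have hge : a + 9/5 - (8/5)*β ≤ (k2:ℝ)+4 := by push_cast at hmgt; linarith
          exact Or.inr (Or.inr (Or.inr (Or.inl ⟨by rw [hM4def, if_neg (not_lt.mpr hge)],
            by rw [hN4def, if_neg (not_lt.mpr hge)]⟩)))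
        · have hge : a + 9/5 - (8/5)*β ≤ (k2:ℝ)+5 := by push_cast at hmgt; linarith
          exact Or.inr (Or.inr (Or.inr (Or.inr ⟨by rw [hM5def, if_neg (not_lt.mpr hge)],
            by rw [hN5def, if_neg (not_lt.mpr hge)]⟩)))
    · -- CASE C upper
      set k0 : ℤ := ⌊a - 11/10 - (2/5)*β⌋ with hk0def
      have hk0a : (k0:ℝ) ≤ a - 11/10 - (2/5)*β := Int.floor_le _
      have hk0b : a - 11/10 - (2/5)*β < k0 + 1 := Int.lt_floor_add_one _
      set k1 : ℤ := ⌊a - 13/5 + (8/5)*β⌋ with hk1def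
      have hk1a : (k1:ℝ) ≤ a - 13/5 + (8/5)*β := Int.floor_le _
      have hk1b : a - 13/5 + (8/5)*β < k1 + 1 := Int.lt_floor_add_one _
      set n41 : ℤ := if ((k1:ℝ)+1 < a + 12/5 - (12/5)*β) then q else q+2 with hn41def
      set n42 : ℤ := if ((k1:ℝ)+2 < a + 12/5 - (12/5)*β) then q else q+2 with hn42def
      clear_value k0 k1 n41 n42
      refine encard_le5 (w1 := vi (k0+1) (q+1)) (w2 := vi (k0+2) (q+1)) (w3 := vi (k0+3) (q+1))
        (w4 := vi (k1+1) n41) (w5 := vi (k1+2) n42) ?_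
      intro v hv
      obtain ⟨m, n, rfl, hs⟩ := memS' hv
      rw [← ha, ← hb] at hs
      obtain ⟨s1,s2,s3,s4,s5,s6,s7,s8,s9,s10⟩ := hs
      have hn1 : b - 5/4 < (n:ℝ) := by linarith
      have hn2 : (n:ℝ) < b + 5/4 := by linarith
      have hncase : n = q ∨ n = q+1 ∨ n = q+2 := by
        have i1 : q - 1 < n := by
          exact_mod_cast (by push_cast; linarith : ((q-1:ℤ):ℝ) < (n:ℝ))
        have i2 : n < q + 3 := by
          exact_mod_cast (by push_cast; linarith : ((n:ℤ):ℝ) < ((q+3:ℤ):ℝ))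
        omega
      simp only [Set.mem_insert_iff, Set.mem_singleton_iff, vi_inj]
      rcases hncase with rfl | rfl | rfl
      · -- n = q
        have hmgt : a - 13/5 + (8/5)*β < (m:ℝ) := by linarith
        have hmlt : (m:ℝ) < a + 12/5 - (12/5)*β := by linarith
        have i1 : k1 < m := by
          exact_mod_cast (by linarith : (k1:ℝ) < (m:ℝ))
        have i2 : m < k1 + 3 := by
          exact_mod_cast (by push_cast; linarith : ((m:ℤ):ℝ) < ((k1+3:ℤ):ℝ))
        have hm12 : m = k1+1 ∨ m = k1+2 := by omega
        rcases hm12 with rfl | rfl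
        · push_cast at hmlt
          exact Or.inr (Or.inr (Or.inr (Or.inl ⟨rfl, by rw [hn41def, if_pos hmlt]⟩)))
        · push_cast at hmlt
          exact Or.inr (Or.inr (Or.inr (Or.inr ⟨rfl, by rw [hn42def, if_pos hmlt]⟩)))
      · -- n = q+1
        push_cast at s3 s8
        have hmgt : a - 11/10 - (2/5)*β < (m:ℝ) := by linarith
        have hmlt : (m:ℝ) < a + 19/10 - (2/5)*β := by linarith
        have i1 : k0 < m := by
          exact_mod_cast (by linarith : (k0:ℝ) < (m:ℝ))
        have i2 : m < k0 + 4 := by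
          exact_mod_cast (by push_cast; linarith : ((m:ℤ):ℝ) < ((k0+4:ℤ):ℝ))
        have hm123 : m = k0+1 ∨ m = k0+2 ∨ m = k0+3 := by omega
        rcases hm123 with rfl | rfl | rfl
        · exact Or.inl ⟨rfl, rfl⟩
        · exact Or.inr (Or.inl ⟨rfl, rfl⟩)
        · exact Or.inr (Or.inr (Or.inl ⟨rfl, rfl⟩))
      · -- n = q+2
        push_cast at s1 s10
        have hmgt : a + 12/5 - (12/5)*β < (m:ℝ) := by linarith
        have hmlt : (m:ℝ) < a - 3/5 + (8/5)*β := by linarith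
        have i1 : k1 < m := by
          exact_mod_cast (by linarith : (k1:ℝ) < (m:ℝ))
        have i2 : m < k1 + 3 := by
          exact_mod_cast (by push_cast; linarith : ((m:ℤ):ℝ) < ((k1+3:ℤ):ℝ))
        have hm12 : m = k1+1 ∨ m = k1+2 := by omega
        rcases hm12 with rfl | rfl
        · push_cast at hmgt
          exact Or.inr (Or.inr (Or.inr (Or.inl ⟨rfl, by
            rw [hn41def, if_neg (not_lt.mpr (le_of_lt hmgt))]⟩)))
        · push_cast at hmgt
          exact Or.inr (Or.inr (Or.inr (Or.inr ⟨rfl, by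
            rw [hn42def, if_neg (not_lt.mpr (le_of_lt hmgt))]⟩)))
end

section
/- Let n ≥ 3, let Q ⊆ ℝ² be a convex body, and let k be a positive integer such that Q + ℤ² is a k-fold lattice tiling of ℝ². Write ℝⁿ = ℝ² × ℝⁿ⁻², let Iⁿ⁻² = [−1/2, 1/2]ⁿ⁻² be the unit cube in ℝⁿ⁻², and let P = Q × Iⁿ⁻² ⊆ ℝⁿ. Then P + ℤⁿ is a k-fold lattice tiling of ℝⁿ. -/
open Set

/-- A convex body: compact convex set with nonempty interior. -/
def IsConvexBody {n : ℕ} (K : Set (Fin n → ℝ)) : Prop :=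
  Convex ℝ K ∧ IsCompact K ∧ (interior K).Nonempty

/-- Projection of `ℝⁿ` onto the first two coordinates. -/
def proj2 {n : ℕ} (hn : 2 ≤ n) (x : Fin n → ℝ) : Fin 2 → ℝ :=
  fun j => x (Fin.castLE hn j)

/-- The prism `Q × [-1/2, 1/2]ⁿ⁻²` over a planar set `Q`, viewed in
`ℝⁿ = ℝ² × ℝⁿ⁻²`. -/
def prism {n : ℕ} (hn : 2 ≤ n) (Q : Set (Fin 2 → ℝ)) : Set (Fin n → ℝ) :=
  {x | proj2 hn x ∈ Q ∧ ∀ l : Fin n, 2 ≤ (l : ℕ) → |x l| ≤ 1 / 2}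

lemma interior_prism_subset {n : ℕ} (hn : 2 ≤ n) (Q : Set (Fin 2 → ℝ)) :
    interior (prism hn Q) ⊆
      {x | proj2 hn x ∈ interior Q ∧ ∀ l : Fin n, 2 ≤ (l : ℕ) → |x l| < 1 / 2} := by
  intro x hx
  rw [mem_interior_iff_mem_nhds, Metric.mem_nhds_iff] at hx
  obtain ⟨ε, hε, hball⟩ := hx
  constructor
  · -- proj2 x ∈ interior Q
    rw [mem_interior_iff_mem_nhds, Metric.mem_nhds_iff]
    refine ⟨ε, hε, ?_⟩
    intro y hy
    set x' : Fin n → ℝ := fun i => if h : (i : ℕ) < 2 then y ⟨i, h⟩ else x i with hx'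
    have hproj : proj2 hn x' = y := by
      funext j
      simp only [proj2, hx']
      rw [dif_pos (by exact j.isLt)]
      exact congrArg y (Fin.ext rfl)
    have hmem : x' ∈ Metric.ball x ε := by
      rw [Metric.mem_ball, dist_pi_lt_iff hε]
      intro i
      by_cases h : (i : ℕ) < 2
      · have : x (Fin.castLE hn ⟨(i : ℕ), h⟩) = x i :=
          congrArg x (Fin.ext rfl)
        simp only [hx', dif_pos h]
        calc dist (y ⟨(i : ℕ), h⟩) (x i)
            = dist (y ⟨(i : ℕ), h⟩) (proj2 hn x ⟨(i : ℕ), h⟩) := by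
              simp only [proj2, this]
          _ ≤ dist y (proj2 hn x) := dist_le_pi_dist _ _ _
          _ < ε := hy
      · simp only [hx', dif_neg h, dist_self]; exact hε
    have := hball hmem
    rw [← hproj]
    exact this.1
  · -- strict bound on the cube coordinates
    intro l hl
    set t : ℝ := x l + (ε / 2) * (if 0 ≤ x l then 1 else -1) with ht
    set x' : Fin n → ℝ := Function.update x l t with hx'
    have hmem : x' ∈ Metric.ball x ε := by
      rw [Metric.mem_ball, dist_pi_lt_iff hε]
      intro i
      by_cases h : i = l
      · subst h
        simp only [hx', Function.update_self, Real.dist_eq, ht]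
        have : x i + ε / 2 * (if 0 ≤ x i then 1 else -1) - x i
            = ε / 2 * (if 0 ≤ x i then 1 else -1) := by ring
        rw [this, abs_mul]
        have h1 : |ε / 2| = ε / 2 := abs_of_pos (by linarith)
        have h2 : |(if 0 ≤ x i then (1:ℝ) else -1)| = 1 := by
          split <;> simp
        rw [h1, h2]; linarith
      · simp only [hx', Function.update_of_ne h, dist_self]; exact hε
    have hx'l : |x' l| ≤ 1 / 2 := (hball hmem).2 l hl
    have hx'val : x' l = t := Function.update_self l t x
    rw [hx'val] at hx'l
    have habs : |t| = |x l| + ε / 2 := by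
      rw [ht]
      by_cases h : 0 ≤ x l
      · rw [if_pos h, mul_one, abs_of_nonneg (by linarith : (0:ℝ) ≤ x l + ε / 2),
          abs_of_nonneg h]
      · push_neg at h
        rw [if_neg (not_le.mpr h), abs_of_neg h]
        have : x l + ε / 2 * (-1) < 0 := by linarith
        rw [abs_of_neg this]; ring
    rw [habs] at hx'l
    linarith

lemma int_eq_of_abs_lt_one {a b : ℤ} (h : |(a : ℝ) - b| < 1) : a = b := by
  have : |((a - b : ℤ) : ℝ)| < 1 := by push_cast; exact h
  rw [← Int.cast_abs] at this
  have h2 : |a - b| < 1 := by exact_mod_cast this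
  have := abs_lt.mp h2
  omega

/-- If `Q + ℤ²` is a `k`-fold lattice tiling of the plane, then the prism
`P = Q × [-1/2, 1/2]ⁿ⁻²` gives a `k`-fold lattice tiling `P + ℤⁿ` of `ℝⁿ`. -/
theorem prism_kfold_tiling (n : ℕ) (hn : 3 ≤ n) (Q : Set (Fin 2 → ℝ))
    (hQ : IsConvexBody Q) (k : ℕ) (hk : 1 ≤ k)
    (hQtile : IsKFoldTiling Q (intLattice 2) k) :
    IsKFoldTiling (prism (by omega : 2 ≤ n) Q) (intLattice n) k := by
  set h2 : 2 ≤ n := by omega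
  intro x
  obtain ⟨hlow, hhigh⟩ := hQtile (proj2 h2 x)
  constructor
  · -- lower bound
    set A : Set (Fin 2 → ℝ) :=
      {u | u ∈ intLattice 2 ∧ proj2 h2 x - u ∈ Q} with hA
    set f : (Fin 2 → ℝ) → (Fin n → ℝ) :=
      fun u i => if h : (i : ℕ) < 2 then u ⟨i, h⟩ else (round (x i) : ℝ) with hf
    have hproj : ∀ u, proj2 h2 (f u) = u := by
      intro u; funext j
      simp only [proj2, hf]
      rw [dif_pos (by exact j.isLt)]
      exact congrArg u (Fin.ext rfl)
    have hinj : Set.InjOn f A := by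
      intro u _ u' _ h
      funext j
      have := congrFun h (Fin.castLE h2 j)
      simp only [hf, dif_pos (show ((Fin.castLE h2 j : Fin n) : ℕ) < 2 from j.isLt)]
        at this
      exact this
    have himg : f '' A ⊆ {v | v ∈ intLattice n ∧ x - v ∈ prism h2 Q} := by
      rintro _ ⟨u, ⟨huL, huQ⟩, rfl⟩
      refine ⟨?_, ?_, ?_⟩
      · intro i
        by_cases h : (i : ℕ) < 2
        · obtain ⟨m, hm⟩ := huL ⟨i, h⟩
          exact ⟨m, by simp only [hf, dif_pos h]; exact hm⟩
        · exact ⟨round (x i), by simp only [hf, dif_neg h]⟩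
      · have : proj2 h2 (x - f u) = proj2 h2 x - u := by
          funext j
          simp only [proj2, Pi.sub_apply]
          congr 1
          exact congrFun (hproj u) j
        rw [this]; exact huQ
      · intro l hl
        have h : ¬ (l : ℕ) < 2 := by omega
        simp only [Pi.sub_apply, hf, dif_neg h]
        exact abs_sub_round (x l)
    calc (k : ℕ∞) ≤ A.encard := hlow
      _ = (f '' A).encard := (hinj.encard_image).symm
      _ ≤ _ := Set.encard_le_encard himg
  · -- upper bound
    set S' : Set (Fin n → ℝ) :=
      {v | v ∈ intLattice n ∧ x - v ∈ interior (prism h2 Q)} with hS'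
    set B : Set (Fin 2 → ℝ) :=
      {u | u ∈ intLattice 2 ∧ proj2 h2 x - u ∈ interior Q} with hB
    have hsub : ∀ v ∈ S', x - v ∈
        {y | proj2 h2 y ∈ interior Q ∧ ∀ l : Fin n, 2 ≤ (l : ℕ) → |y l| < 1 / 2} :=
      fun v hv => interior_prism_subset h2 Q hv.2
    have himg : proj2 h2 '' S' ⊆ B := by
      rintro _ ⟨v, hv, rfl⟩
      refine ⟨fun j => hv.1 (Fin.castLE h2 j), ?_⟩
      have : proj2 h2 x - proj2 h2 v = proj2 h2 (x - v) := by
        funext j; simp [proj2]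
      rw [this]
      exact (hsub v hv).1
    have hinj : Set.InjOn (proj2 h2) S' := by
      intro v hv w hw h
      funext i
      by_cases hi : (i : ℕ) < 2
      · have hcast : (Fin.castLE h2 ⟨(i : ℕ), hi⟩) = i := Fin.ext rfl
        have := congrFun h ⟨(i : ℕ), hi⟩
        simpa only [proj2, hcast] using this
      · have hli : 2 ≤ (i : ℕ) := by omega
        have h1 : |(x - v) i| < 1 / 2 := (hsub v hv).2 i hli
        have h2' : |(x - w) i| < 1 / 2 := (hsub w hw).2 i hli
        obtain ⟨a, ha⟩ := hv.1 i
        obtain ⟨b, hb⟩ := hw.1 i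
        rw [ha, hb]
        norm_cast
        apply int_eq_of_abs_lt_one
        simp only [Pi.sub_apply, ha, hb] at h1 h2'
        have : (a : ℝ) - b = (x i - b) - (x i - a) := by ring
        rw [this]
        calc |(x i - b) - (x i - a)| ≤ |x i - b| + |x i - a| := abs_sub _ _
          _ < 1 := by linarith
    calc S'.encard = (proj2 h2 '' S').encard := (hinj.encard_image).symm
      _ ≤ B.encard := Set.encard_le_encard himg
      _ ≤ (k : ℕ∞) := hhigh
end
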